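/- For any real symmetric n×n matrices A₁, A₂ (any n ≥ 1), the set {(xᵀA₁x, xᵀA₂x) : x ∈ ℝⁿ} is a convex cone in ℝ². -/

import Mathlib

open Matrix

lemma dines_half (c s r2 : ℝ) (h1 : c^2 + s^2 = 1) (h2 : 0 < r2) :
    ∃ α β : ℝ, α^2 + β^2 = r2 ∧ α^2 - β^2 = r2*c ∧ 2*α*β = r2*s := by
  have hc1 : c ≤ 1 := by nlinarith
  have hc1' : -1 ≤ c := by nlinarith
  by_cases hc : c = -1
  · have hs0 : s = 0 := by nlinarith
    refine ⟨0, Real.sqrt r2, ?_, ?_, ?_⟩ <;>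
      simp [Real.sq_sqrt h2.le, hc, hs0]
  · have hpos : 0 < 1 + c := by
      rcases lt_or_eq_of_le hc1' with h | h
      · linarith
      · exact absurd h.symm hc
    have hargpos : 0 < r2 * (1+c) / 2 := by positivity
    set c1 := Real.sqrt (r2 * (1+c) / 2) with hc1def
    have hc1pos : 0 < c1 := Real.sqrt_pos.mpr hargpos
    have hc1sq : c1^2 = r2 * (1+c) / 2 := Real.sq_sqrt hargpos.le
    set s1 := r2 * s / (2 * c1) with hs1def
    have hs1sq : s1^2 = r2 * (1-c) / 2 := by
      rw [hs1def, div_pow]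
      rw [div_eq_iff (by positivity)]
      have : (2*c1)^2 = 4 * c1^2 := by ring
      rw [this, hc1sq]
      linear_combination r2^2 * h1
    refine ⟨c1, s1, by nlinarith, by nlinarith, ?_⟩
    rw [hs1def]; field_simp

lemma dines_para {m1 m2 w1 w2 : ℝ} (hm : ¬(m1 = 0 ∧ m2 = 0)) (h : w1*m2 = w2*m1) :
    ∃ lam : ℝ, w1 = lam*m1 ∧ w2 = lam*m2 := by
  by_cases h1 : m1 = 0
  · have h2 : m2 ≠ 0 := fun h2 => hm ⟨h1, h2⟩
    refine ⟨w2/m2, ?_, by field_simp⟩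
    have : w1 * m2 = 0 := by rw [h, h1]; ring
    rcases mul_eq_zero.mp this with h' | h'
    · rw [h', h1]; ring
    · exact absurd h' h2
  · refine ⟨w1/m1, by field_simp, ?_⟩
    field_simp
    linear_combination -h

lemma dines_dir (u1 u2 v1 v2 m1 m2 : ℝ) (hm : ¬(m1 = 0 ∧ m2 = 0)) :
    ∃ c s lam : ℝ, c^2 + s^2 = 1 ∧ 0 ≤ lam ∧
      c*u1 + s*v1 = lam*m1 ∧ c*u2 + s*v2 = lam*m2 := by
  obtain ⟨c, s, hcs, horth⟩ : ∃ c s : ℝ, c^2 + s^2 = 1 ∧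
      c*(u1*m2 - u2*m1) + s*(v1*m2 - v2*m1) = 0 := by
    by_cases hab : u1*m2 - u2*m1 = 0 ∧ v1*m2 - v2*m1 = 0
    · exact ⟨1, 0, by norm_num, by rw [hab.1, hab.2]; ring⟩
    · have hN : 0 < (u1*m2 - u2*m1)^2 + (v1*m2 - v2*m1)^2 := by
        rcases not_and_or.mp hab with h | h <;> positivity
      have hNs : 0 < Real.sqrt ((u1*m2 - u2*m1)^2 + (v1*m2 - v2*m1)^2) :=
        Real.sqrt_pos.mpr hN
      have hNsq : (Real.sqrt ((u1*m2 - u2*m1)^2 + (v1*m2 - v2*m1)^2))^2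
          = (u1*m2 - u2*m1)^2 + (v1*m2 - v2*m1)^2 := Real.sq_sqrt hN.le
      refine ⟨(v1*m2 - v2*m1) / Real.sqrt ((u1*m2 - u2*m1)^2 + (v1*m2 - v2*m1)^2),
        -(u1*m2 - u2*m1) / Real.sqrt ((u1*m2 - u2*m1)^2 + (v1*m2 - v2*m1)^2), ?_, by ring⟩
      rw [div_pow, div_pow, ← add_div, hNsq]
      rw [div_eq_one_iff_eq hN.ne']
      ring
  have hw : (c*u1 + s*v1) * m2 = (c*u2 + s*v2) * m1 := by linear_combination horth
  obtain ⟨lam, hl1, hl2⟩ := dines_para hm hw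
  rcases le_or_gt 0 lam with h | h
  · exact ⟨c, s, lam, hcs, h, hl1, hl2⟩
  · refine ⟨-c, -s, -lam, by linear_combination hcs, by linarith, ?_, ?_⟩
    · linear_combination -hl1
    · linear_combination -hl2

lemma dines_key (p1 p2 q1 q2 v1 v2 : ℝ) :
    ∃ α β : ℝ, α^2*p1 + 2*α*β*v1 + β^2*q1 = (p1+q1)/2 ∧
               α^2*p2 + 2*α*β*v2 + β^2*q2 = (p2+q2)/2 := by
  by_cases hm : (p1+q1)/2 = 0 ∧ (p2+q2)/2 = 0
  · refine ⟨0, 0, ?_, ?_⟩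
    · simpa using hm.1.symm
    · simpa using hm.2.symm
  · obtain ⟨c, s, lam, hcs, hlam, h1, h2⟩ :=
      dines_dir ((p1-q1)/2) ((p2-q2)/2) v1 v2 ((p1+q1)/2) ((p2+q2)/2) hm
    have hpos : 0 < 1 + lam := by linarith
    have hr : (1/(1+lam)) * (1+lam) = 1 := by field_simp
    obtain ⟨α, β, hs, hd, hx⟩ := dines_half c s (1/(1+lam)) hcs (by positivity)
    refine ⟨α, β, ?_, ?_⟩
    · linear_combination ((p1+q1)/2) * hs + ((p1-q1)/2) * hd + v1 * hx
        + (1/(1+lam)) * h1 + ((p1+q1)/2) * hr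
    · linear_combination ((p2+q2)/2) * hs + ((p2-q2)/2) * hd + v2 * hx
        + (1/(1+lam)) * h2 + ((p2+q2)/2) * hr

lemma dines_expand {n : ℕ} (A : Matrix (Fin n) (Fin n) ℝ) (hA : A.IsSymm)
    (x y : Fin n → ℝ) (α β : ℝ) :
    (α • x + β • y) ⬝ᵥ A *ᵥ (α • x + β • y)
      = α^2 * (x ⬝ᵥ A *ᵥ x) + 2*α*β*(x ⬝ᵥ A *ᵥ y) + β^2 * (y ⬝ᵥ A *ᵥ y) := by
  have hyx : y ⬝ᵥ A *ᵥ x = x ⬝ᵥ A *ᵥ y := by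
    rw [dotProduct_mulVec, ← mulVec_transpose, hA.eq, dotProduct_comm]
  simp only [mulVec_add, mulVec_smul, dotProduct_add, add_dotProduct,
    dotProduct_smul, smul_dotProduct, smul_eq_mul]
  linear_combination (α*β) * hyx

lemma dines_smul {n : ℕ} (A : Matrix (Fin n) (Fin n) ℝ) (x : Fin n → ℝ) (t : ℝ) :
    (t • x) ⬝ᵥ A *ᵥ (t • x) = t^2 * (x ⬝ᵥ A *ᵥ x) := by
  simp only [mulVec_smul, dotProduct_smul, smul_dotProduct, smul_eq_mul]
  ring

theorem dines (n : ℕ) (hn : 1 ≤ n) (A₁ A₂ : Matrix (Fin n) (Fin n) ℝ)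
    (h₁ : A₁.IsSymm) (h₂ : A₂.IsSymm) :
    Convex ℝ {y : ℝ × ℝ | ∃ x : Fin n → ℝ, y = (x ⬝ᵥ A₁ *ᵥ x, x ⬝ᵥ A₂ *ᵥ x)} ∧
    ∀ y ∈ {y : ℝ × ℝ | ∃ x : Fin n → ℝ, y = (x ⬝ᵥ A₁ *ᵥ x, x ⬝ᵥ A₂ *ᵥ x)},
      ∀ c : ℝ, 0 ≤ c →
        c • y ∈ {y : ℝ × ℝ | ∃ x : Fin n → ℝ, y = (x ⬝ᵥ A₁ *ᵥ x, x ⬝ᵥ A₂ *ᵥ x)} := by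
  set S := {y : ℝ × ℝ | ∃ x : Fin n → ℝ, y = (x ⬝ᵥ A₁ *ᵥ x, x ⬝ᵥ A₂ *ᵥ x)} with hS
  have cone : ∀ y ∈ S, ∀ c : ℝ, 0 ≤ c → c • y ∈ S := by
    rintro y ⟨x, rfl⟩ c hc
    refine ⟨Real.sqrt c • x, ?_⟩
    rw [dines_smul, dines_smul, Real.sq_sqrt hc]
    rfl
  have add_mem : ∀ p ∈ S, ∀ q ∈ S, p + q ∈ S := by
    rintro p ⟨x, rfl⟩ q ⟨y, rfl⟩
    obtain ⟨α, β, e1, e2⟩ := dines_key (x ⬝ᵥ A₁ *ᵥ x) (x ⬝ᵥ A₂ *ᵥ x)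
      (y ⬝ᵥ A₁ *ᵥ y) (y ⬝ᵥ A₂ *ᵥ y) (x ⬝ᵥ A₁ *ᵥ y) (x ⬝ᵥ A₂ *ᵥ y)
    have hz : ((α • x + β • y) ⬝ᵥ A₁ *ᵥ (α • x + β • y),
        (α • x + β • y) ⬝ᵥ A₂ *ᵥ (α • x + β • y))
        = ((x ⬝ᵥ A₁ *ᵥ x + y ⬝ᵥ A₁ *ᵥ y)/2, (x ⬝ᵥ A₂ *ᵥ x + y ⬝ᵥ A₂ *ᵥ y)/2) := by
      rw [dines_expand A₁ h₁, dines_expand A₂ h₂, e1, e2]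
    have hmem : ((x ⬝ᵥ A₁ *ᵥ x + y ⬝ᵥ A₁ *ᵥ y)/2, (x ⬝ᵥ A₂ *ᵥ x + y ⬝ᵥ A₂ *ᵥ y)/2) ∈ S :=
      ⟨α • x + β • y, hz.symm⟩
    have := cone _ hmem 2 (by norm_num)
    convert this using 1
    ext <;> simp <;> ring
  constructor
  · rintro p hp q hq a b ha hb hab
    exact add_mem _ (cone p hp a ha) _ (cone q hq b hb)
  · exact cone
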